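/- arXiv:2505.09849 — 3 statements merged into one kernel-verified Lean document; each statement's English description precedes it below -/
import Mathlib

section
/- Let r be a positive integer. In the ring ℚ[[X]] of formal power series over ℚ, let B_r = ∑_{k=0}^∞ (1/((r−1)k+1))·C(rk,k)·X^k and let L = ∑_{k=1}^∞ C(rk,k)·X^k/k. Then B_r · L′ = r · B_r′, where ′ denotes the formal derivative of power series. (Since L and log(B_r) both have constant term 0 and B_r has constant term 1, this is equivalent to the paper's identity ∑_{k=1}^∞ C(rk,k)·X^k/k = r·log(B_r(X)).) -/
open PowerSeries Finset

namespace Stmt0Aux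

/-- coefficient of `B_r^s` -/
noncomputable def aa (r s m : ℕ) : ℚ :=
  if m = 0 then 1 else (s : ℚ) / (r * m + s) * ((r * m + s).choose m : ℚ)

lemma aa_zero (r s : ℕ) : aa r s 0 = 1 := by simp [aa]

lemma aa_zero_left (r m : ℕ) (hm : m ≠ 0) : aa r 0 m = 0 := by simp [aa, hm]

lemma aa_of_ne (r s m : ℕ) (hm : m ≠ 0) :
    aa r s m = (s : ℚ) / ((r * m + s : ℕ) : ℚ) * (((r * m + s).choose m : ℕ) : ℚ) := by
  rw [aa, if_neg hm]; norm_cast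

lemma aa_rec (r : ℕ) (hr : 0 < r) (s m : ℕ) (hm : 0 < m) :
    aa r (s + 1) m = aa r s m + aa r (s + r) (m - 1) := by
  obtain ⟨k, rfl⟩ := Nat.exists_eq_succ_of_ne_zero hm.ne'
  simp only [Nat.succ_sub_one, Nat.succ_eq_add_one, Nat.zero_add]
  rcases Nat.eq_zero_or_pos k with rfl | hk
  · rw [show (0:ℕ)+1 = 1 from rfl, aa_of_ne _ _ _ one_ne_zero, aa_of_ne _ _ _ one_ne_zero, aa_zero]
    have h1 : ((r * 1 + (s + 1) : ℕ) : ℚ) ≠ 0 := by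
      have : 0 < r * 1 + (s + 1) := by positivity
      exact_mod_cast this.ne'
    have h2 : ((r * 1 + s : ℕ) : ℚ) ≠ 0 := by
      have : 0 < r * 1 + s := by omega
      exact_mod_cast this.ne'
    simp only [Nat.choose_one_right]
    field_simp
    exact Nat.cast_succ _
  · rw [aa_of_ne _ _ _ (Nat.succ_ne_zero k), aa_of_ne _ _ _ (Nat.succ_ne_zero k),
      aa_of_ne _ _ _ hk.ne']
    have e1 : r * (k + 1) + (s + 1) = (r * (k + 1) + s) + 1 := by omega
    have e2 : r * k + (s + r) = r * (k + 1) + s := by ring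
    rw [show k.succ = k + 1 from rfl] at *
    rw [e1, e2]
    set n := r * (k + 1) + s with hn
    have hnpos : 0 < n := by positivity
    have hn0 : ((n : ℕ) : ℚ) ≠ 0 := by exact_mod_cast hnpos.ne'
    have hn1 : ((n + 1 : ℕ) : ℚ) ≠ 0 := by
      have : 0 < n + 1 := by omega
      exact_mod_cast this.ne'
    have hNQ : ((n : ℕ) : ℚ) = r * (k + 1) + s := by rw [hn]; push_cast; ring
    have h1 : (((n + 1).choose (k + 1) : ℕ) : ℚ)
        = ((n.choose k : ℕ) : ℚ) + ((n.choose (k + 1) : ℕ) : ℚ) := by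
      exact_mod_cast Nat.choose_succ_succ n k
    have h2 : (((n : ℕ) : ℚ) + 1) * ((n.choose k : ℕ) : ℚ)
        = (((n + 1).choose (k + 1) : ℕ) : ℚ) * (k + 1) := by
      exact_mod_cast Nat.add_one_mul_choose_eq n k
    have hn1' : ((n : ℕ) : ℚ) + 1 ≠ 0 := by push_cast at hn1; exact_mod_cast hn1
    rw [div_mul_eq_mul_div, div_mul_eq_mul_div, div_mul_eq_mul_div, ← add_div]
    rw [div_eq_div_iff hn1 hn0]
    push_cast
    linear_combination ((s : ℚ) * ((n : ℚ) + 1)) * h1 - (r : ℚ) * h2 +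
      (((n+1).choose (k+1) : ℚ)) * hNQ

end Stmt0Aux

namespace Stmt0Aux

lemma aa_conv (r : ℕ) (hr : 0 < r) (p : ℕ) :
    ∀ m, ∀ s, ∑ i ∈ Finset.range (m + 1), aa r p i * aa r s (m - i) = aa r (p + s) m := by
  intro m
  induction m with
  | zero => intro s; simp [aa_zero]
  | succ m IH =>
    intro s
    induction s with
    | zero =>
      rw [Finset.sum_eq_single (m + 1)]
      · simp [aa_zero]
      · intro b hb hbne
        have hb' : b < m + 2 := Finset.mem_range.mp hb
        rw [aa_zero_left r (m + 1 - b) (by omega), mul_zero]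
      · simp
    | succ s IHs =>
      have H1 := IH (s + r)
      have H3 := aa_rec r hr (p + s) (m + 1) (Nat.succ_pos m)
      simp only [Nat.add_sub_cancel] at H3
      rw [Finset.sum_range_succ] at IHs ⊢
      have hsplit : ∑ i ∈ Finset.range (m + 1), aa r p i * aa r (s + 1) (m + 1 - i)
          = ∑ i ∈ Finset.range (m + 1), aa r p i * aa r s (m + 1 - i)
            + ∑ i ∈ Finset.range (m + 1), aa r p i * aa r (s + r) (m - i) := by
        rw [← Finset.sum_add_distrib]
        apply Finset.sum_congr rfl
        intro i hi
        have hi' : i < m + 1 := Finset.mem_range.mp hi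
        rw [aa_rec r hr s (m + 1 - i) (by omega), show (m + 1 - i) - 1 = m - i from by omega,
          mul_add]
      rw [hsplit, H1]
      simp only [Nat.sub_self, aa_zero, mul_one] at IHs ⊢
      rw [show p + (s + r) = p + s + r from by omega, show p + (s + 1) = p + s + 1 from by omega]
      linear_combination IHs - H3

/-- the power series `B_r ^ s` -/
noncomputable def AA (r s : ℕ) : PowerSeries ℚ := PowerSeries.mk (aa r s)

lemma AA_mul (r : ℕ) (hr : 0 < r) (p s : ℕ) : AA r p * AA r s = AA r (p + s) := by
  ext n
  rw [AA, AA, AA, PowerSeries.coeff_mul, Finset.Nat.sum_antidiagonal_eq_sum_range_succ_mk]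
  simp only [coeff_mk]
  exact aa_conv r hr p n s

lemma AA_pow (r : ℕ) (hr : 0 < r) (s : ℕ) : (AA r 1) ^ s = AA r s := by
  induction s with
  | zero =>
    ext n
    simp only [pow_zero, AA, coeff_mk, PowerSeries.coeff_one, aa]
    rcases eq_or_ne n 0 with rfl | hn
    · simp
    · simp [hn]
  | succ s IH => rw [pow_succ, IH, AA_mul r hr s 1]

lemma aa_of_pos (r s m : ℕ) (hs : 0 < s) :
    aa r s m = (s : ℚ) / ((r * m + s : ℕ) : ℚ) * (((r * m + s).choose m : ℕ) : ℚ) := by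
  rcases Nat.eq_zero_or_pos m with rfl | hm
  · have hs' : ((r * 0 + s : ℕ) : ℚ) ≠ 0 := by
      have : 0 < r * 0 + s := by omega
      exact_mod_cast this.ne'
    rw [aa_zero, Nat.choose_zero_right]
    rw [show ((r * 0 + s : ℕ) : ℚ) = ((s : ℕ) : ℚ) from by norm_num] at hs' ⊢
    rw [Nat.cast_one, mul_one, eq_comm, div_self hs']
  · exact aa_of_ne r s m hm.ne'

lemma aa_shift (r : ℕ) (hr : 0 < r) (n : ℕ) : aa r r n = aa r 1 (n + 1) := by
  rw [aa_of_pos r r n hr, aa_of_ne _ _ _ (Nat.succ_ne_zero n)]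
  have e1 : r * (n + 1) + 1 = (r * n + r) + 1 := by ring
  rw [e1]
  have h2 : (((r * n + r : ℕ) : ℚ) + 1) * (((r * n + r).choose n : ℕ) : ℚ)
      = ((((r * n + r) + 1).choose (n + 1) : ℕ) : ℚ) * (n + 1) := by
    exact_mod_cast Nat.add_one_mul_choose_eq (r * n + r) n
  have hd1 : ((r * n + r : ℕ) : ℚ) ≠ 0 := by
    have : 0 < r * n + r := by positivity
    exact_mod_cast this.ne'
  have hd2 : ((r * n + r + 1 : ℕ) : ℚ) ≠ 0 := by
    have : 0 < r * n + r + 1 := by omega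
    exact_mod_cast this.ne'
  rw [div_mul_eq_mul_div, div_mul_eq_mul_div, div_eq_div_iff hd1 hd2]
  push_cast at h2 ⊢
  linear_combination ((r : ℚ)) * h2

end Stmt0Aux

/-- The power series identity `∑_{k≥1} C(rk,k) X^k/k = r log(B_r(X))` in the
differentiated form `B_r · L′ = r · B_r′`, where `B_r` is the generalized
binomial series and `L = ∑_{k≥1} C(rk,k) X^k/k`. -/
theorem stmt0 (r : ℕ) (hr : 0 < r)
    (B L : PowerSeries ℚ)
    (hB : B = PowerSeries.mk fun k => (((r : ℚ) - 1) * k + 1)⁻¹ * ((r * k).choose k : ℚ))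
    (hL : L = PowerSeries.mk fun k => if k = 0 then 0 else ((r * k).choose k : ℚ) / k) :
    B * PowerSeries.derivative ℚ L = (r : PowerSeries ℚ) * PowerSeries.derivative ℚ B := by
  have h1r : (1 : ℚ) ≤ (r : ℚ) := by exact_mod_cast hr
  have hdpos : ∀ k : ℕ, (0 : ℚ) < ((r : ℚ) - 1) * k + 1 := by
    intro k
    have := mul_nonneg (by linarith : (0:ℚ) ≤ (r:ℚ) - 1) (by positivity : (0:ℚ) ≤ (k:ℚ))
    linarith
  have hB1 : B = Stmt0Aux.AA r 1 := by
    rw [hB, Stmt0Aux.AA]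
    ext k
    simp only [PowerSeries.coeff_mk]
    rcases Nat.eq_zero_or_pos k with rfl | hk
    · simp [Stmt0Aux.aa_zero]
    · rw [Stmt0Aux.aa_of_ne r 1 k hk.ne']
      have hc : ((r * k).choose k : ℚ) * (((r * k : ℕ) : ℚ) + 1)
          = ((r * k + 1).choose k : ℚ) * (((r * k + 1 - k : ℕ)) : ℚ) := by
        exact_mod_cast Nat.choose_mul_succ_eq (r * k) k
      have hkr : k ≤ r * k := Nat.le_mul_of_pos_left k hr
      have hsub : ((r * k + 1 - k : ℕ) : ℚ) = ((r : ℚ) - 1) * k + 1 := by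
        rw [Nat.cast_sub (by omega)]; push_cast; ring
      have hd : (((r : ℚ) - 1) * k + 1) ≠ 0 := (hdpos k).ne'
      have hd2 : ((r * k + 1 : ℕ) : ℚ) ≠ 0 := by
        have : 0 < r * k + 1 := by omega
        exact_mod_cast this.ne'
      rw [inv_mul_eq_div, div_mul_eq_mul_div, div_eq_div_iff hd hd2]
      push_cast at hc hsub ⊢
      linear_combination hc + (((r * k + 1).choose k : ℚ)) * hsub
  have hBr : B ^ r = Stmt0Aux.AA r r := by rw [hB1, Stmt0Aux.AA_pow r hr]
  have hcoeff : ∀ k : ℕ, Stmt0Aux.aa r 1 k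
      = (((r : ℚ) - 1) * k + 1)⁻¹ * ((r * k).choose k : ℚ) := by
    intro k
    have h := congrArg (PowerSeries.coeff k) hB1
    rw [hB] at h
    simpa [Stmt0Aux.AA] using h.symm
  have hfun : B = 1 + PowerSeries.X * B ^ r := by
    rw [hBr, hB1]
    ext n
    rcases n with _ | m
    · simp [Stmt0Aux.AA, PowerSeries.coeff_zero_eq_constantCoeff, map_add, map_mul,
        PowerSeries.constantCoeff_X, Stmt0Aux.aa_zero]
    · rw [map_add, PowerSeries.coeff_one, if_neg (Nat.succ_ne_zero m),
        PowerSeries.coeff_succ_X_mul]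
      simp only [Stmt0Aux.AA, PowerSeries.coeff_mk, zero_add]
      exact (Stmt0Aux.aa_shift r hr m).symm
  have hLd : PowerSeries.derivative ℚ L
      = ((r : PowerSeries ℚ) - 1) * PowerSeries.derivative ℚ B + B ^ r := by
    have hC : ((r : PowerSeries ℚ) - 1) = PowerSeries.C ((r : ℚ) - 1) := by
      rw [map_sub, map_one, map_natCast]
    rw [hBr, hC]
    ext n
    rw [map_add, PowerSeries.coeff_C_mul, PowerSeries.coeff_derivative,
      PowerSeries.coeff_derivative, hL, hB, PowerSeries.coeff_mk, PowerSeries.coeff_mk,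
      if_neg (Nat.succ_ne_zero n)]
    have haan : (PowerSeries.coeff n) (Stmt0Aux.AA r r) = Stmt0Aux.aa r 1 (n + 1) := by
      simp only [Stmt0Aux.AA, PowerSeries.coeff_mk]
      exact Stmt0Aux.aa_shift r hr n
    rw [haan, hcoeff (n + 1)]
    have hd : (((r : ℚ) - 1) * ((n : ℚ) + 1) + 1) ≠ 0 := by
      have := hdpos (n + 1); push_cast at this; exact this.ne'
    have hn1 : ((n : ℚ) + 1) ≠ 0 := by positivity
    push_cast
    field_simp
    have hd' : (-(n:ℚ) + n * r + r) ≠ 0 := by intro h; apply hd; linear_combination h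
    ring_nf
    have hinv := mul_inv_cancel₀ hd'
    linear_combination (-((((r + r * n).choose (1 + n) : ℕ)) : ℚ)) * hinv
  obtain ⟨t, rfl⟩ := Nat.exists_eq_succ_of_ne_zero hr.ne'
  simp only [Nat.succ_eq_add_one] at hfun hLd ⊢
  have hd : PowerSeries.derivative ℚ B = B ^ (t + 1)
      + PowerSeries.X * (((t : PowerSeries ℚ) + 1) * B ^ t * PowerSeries.derivative ℚ B) := by
    conv_lhs => rw [hfun]
    rw [map_add, Derivation.map_one_eq_zero, zero_add, Derivation.leibniz,
      Derivation.leibniz_pow, PowerSeries.derivative_X]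
    simp only [smul_eq_mul, nsmul_eq_mul, Nat.add_sub_cancel, mul_one]
    push_cast
    ring
  have hx : PowerSeries.X * B ^ (t + 1) = B - 1 := by linear_combination -hfun
  rw [hLd]
  have hcast : ((t + 1 : ℕ) : PowerSeries ℚ) = (t : PowerSeries ℚ) + 1 := by push_cast; ring
  rw [hcast]
  linear_combination (-B) * hd - ((t : PowerSeries ℚ) + 1) * (PowerSeries.derivative ℚ B) * hx
end

section
/- One has the identity ∑_{k=0}^{n−1} C(rk,k)·y^{n−k}/(n−k) = ∑_{k=1}^{n} C(rn, n−k)·(−1)^k·(s_k − r)/k in A. -/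
open PowerSeries

namespace Stmt9Aux
variable {A : Type*} [CommRing A]

/-- explicit inverse of `1 + a X`. -/
noncomputable def geomInv (a : A) : A⟦X⟧ := PowerSeries.mk fun k => (-a)^k

lemma geom_mul (a : A) : (1 + PowerSeries.C a * X) * geomInv a = 1 := by
  ext n
  cases n with
  | zero => simp [geomInv]
  | succ m =>
    have h1 : (PowerSeries.C a * X) * geomInv a = PowerSeries.C a * (X * geomInv a) := by ring
    rw [add_mul, one_mul, h1, map_add, PowerSeries.coeff_C_mul, coeff_succ_X_mul]
    simp [geomInv, pow_succ]
    ring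

lemma derivation_prod {ι : Type*} [DecidableEq ι] (s : Finset ι) (f : ι → A⟦X⟧) :
    d⁄dX A (∏ i ∈ s, f i) = ∑ i ∈ s, d⁄dX A (f i) * ∏ j ∈ s.erase i, f j := by
  induction s using Finset.induction with
  | empty => simp
  | @insert a s ha ih =>
    rw [Finset.prod_insert ha, Derivation.leibniz, smul_eq_mul, smul_eq_mul, ih,
      Finset.sum_insert ha, Finset.erase_insert ha, Finset.mul_sum]
    have h2 : ∀ i ∈ s, (d⁄dX A) (f i) * ∏ j ∈ (insert a s).erase i, f j
        = f a * ((d⁄dX A) (f i) * ∏ j ∈ s.erase i, f j) := by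
      intro i hi
      rw [Finset.erase_insert_of_ne (by rintro rfl; exact ha hi),
        Finset.prod_insert (fun h => ha (Finset.mem_of_mem_erase h))]
      ring
    rw [Finset.sum_congr rfl h2]
    ring

lemma coeff_one_add_X_pow (N k : ℕ) :
    (PowerSeries.coeff k) ((1 + X) ^ N) = (N.choose k : A) := by
  have h : ((1 + X : A⟦X⟧)) = ((1 + Polynomial.X : Polynomial A) : A⟦X⟧) := by
    push_cast; rfl
  rw [h, ← Polynomial.coe_pow, Polynomial.coeff_coe, Polynomial.coeff_one_add_X_pow]

variable [Algebra ℚ A]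

lemma isUnit_natCast {k : ℕ} (hk : k ≠ 0) : IsUnit ((k : ℕ) : A) := by
  have h : ((k : ℕ) : A) = algebraMap ℚ A (k : ℚ) := by rw [map_natCast]
  rw [h]
  exact (isUnit_iff_ne_zero.mpr (by exact_mod_cast hk)).map _

lemma inv_nat_mul {k : ℕ} (hk : k ≠ 0) : Ring.inverse ((k : ℕ) : A) * ((k : ℕ) : A) = 1 :=
  Ring.inverse_mul_cancel _ (isUnit_natCast hk)

end Stmt9Aux

open Stmt9Aux

/-- Theorem 5.1, identity (12):
`∑_{k=0}^{n−1} C(rk,k) y^{n−k}/(n−k) = ∑_{k=1}^n C(rn,n−k) (−1)^k (s_k − r)/k`. -/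
theorem stmt9 (A : Type*) [CommRing A] [Algebra ℚ A]
    (r n : ℕ) (hr : 0 < r) (hn : 0 < n) (y : A) (c : Fin r → A)
    (hfac : (∏ i : Fin r, (1 + Polynomial.C (c i) * Polynomial.X)) =
      (1 + Polynomial.X) ^ r - Polynomial.C y * Polynomial.X) :
    ∑ k ∈ Finset.range n,
        ((r * k).choose k : A) * y ^ (n - k) * Ring.inverse (((n - k : ℕ) : A)) =
    ∑ k ∈ Finset.Icc 1 n,
        ((r * n).choose (n - k) : A) * (-1 : A) ^ k *
          ((∑ i : Fin r, (c i) ^ k) - (r : A)) * Ring.inverse ((k : A)) := by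
  classical
  have hrn : r ≠ 0 := hr.ne'
  set S : ℕ → A := fun k => ∑ i : Fin r, c i ^ k with hSdef
  set U : A⟦X⟧ˣ := Units.mkOfMulEqOne (1 + X) (geomInv (1:A))
    (by simpa using geom_mul (1:A)) with hUdef
  have hUval : (U : A⟦X⟧) = 1 + X := rfl
  set W : A⟦X⟧ := ((U⁻¹ : A⟦X⟧ˣ) : A⟦X⟧) with hWdef
  have hWval : W = geomInv (1 : A) := rfl
  have hUW : (1 + X) * W = 1 := by
    rw [hWdef, ← hUval]; exact_mod_cast U.mul_inv
  set V : Fin r → A⟦X⟧ˣ := fun i => Units.mkOfMulEqOne (1 + PowerSeries.C (c i) * X)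
    (geomInv (c i)) (geom_mul (c i)) with hVdef
  set Q : A⟦X⟧ˣ := ∏ i, V i with hQdef
  have hQprod : (Q : A⟦X⟧) = ∏ i, (1 + PowerSeries.C (c i) * X) := by
    rw [hQdef]
    exact (map_prod (Units.coeHom A⟦X⟧) V Finset.univ).trans
      (Finset.prod_congr rfl fun i _ => rfl)
  have hQval : (Q : A⟦X⟧) = (1 + X) ^ r - PowerSeries.C y * X := by
    have h := congrArg (Polynomial.coeToPowerSeries.ringHom (R := A)) hfac
    rw [map_prod, map_sub, map_pow, map_mul, map_add] at h
    simp only [Polynomial.coeToPowerSeries.ringHom_apply, Polynomial.coe_add,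
      Polynomial.coe_mul, Polynomial.coe_one, Polynomial.coe_C, Polynomial.coe_X,
      map_one] at h
    rw [hQprod, h]
  -- the series G = ∑ (-1)^k s_{k+1} X^k
  set G : A⟦X⟧ := PowerSeries.mk (fun k => (-1:A)^k * S (k+1)) with hGdef
  have hGsum : G = ∑ i, PowerSeries.C (c i) * geomInv (c i) := by
    ext k
    rw [map_sum, hGdef, coeff_mk, hSdef, Finset.mul_sum]
    refine Finset.sum_congr rfl fun i _ => ?_
    rw [PowerSeries.coeff_C_mul, geomInv, coeff_mk, neg_pow, pow_succ]
    ring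
  have hdQ : d⁄dX A (Q : A⟦X⟧) = G * (Q : A⟦X⟧) := by
    rw [hQprod, derivation_prod, hGsum, Finset.sum_mul]
    refine Finset.sum_congr rfl fun i _ => ?_
    have hder : d⁄dX A (1 + PowerSeries.C (c i) * X) = PowerSeries.C (c i) := by
      rw [map_add, Derivation.leibniz]; simp
    rw [hder, ← Finset.mul_prod_erase Finset.univ _ (Finset.mem_univ i), ← mul_assoc,
      mul_assoc (PowerSeries.C (c i)) (geomInv (c i)),
      mul_comm (geomInv (c i)), geom_mul, mul_one]
  have hpoly : d⁄dX A (Q : A⟦X⟧) * (1 + X)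
      = (r : A⟦X⟧) * (Q : A⟦X⟧) + PowerSeries.C y * ((r:A⟦X⟧) * X - X - 1) := by
    rw [hQval, map_sub, Derivation.leibniz_pow]
    have h1 : d⁄dX A (1 + X) = 1 := by simp
    have h2 : d⁄dX A (PowerSeries.C y * X) = PowerSeries.C y := by
      rw [Derivation.leibniz]; simp
    rw [h1, h2, smul_eq_mul, mul_one, nsmul_eq_mul]
    have h3 : ((1+X:A⟦X⟧))^(r-1) * (1+X) = (1+X)^r := pow_sub_one_mul hrn _
    linear_combination (r : A⟦X⟧) * h3
  set H : A⟦X⟧ := PowerSeries.mk (fun k => (-1:A)^k * (S (k+1) - r)) with hHdef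
  have hHGW : H = G - (r:A⟦X⟧) * W := by
    ext k
    have hWc : (PowerSeries.coeff k) W = (-1:A)^k := by
      rw [hWval, geomInv, coeff_mk]
    have hrC : ((r : ℕ) : A⟦X⟧) = PowerSeries.C ((r:ℕ):A) := (map_natCast (PowerSeries.C (R := A)) r).symm
    rw [map_sub, hHdef, hGdef, coeff_mk, coeff_mk, hrC, PowerSeries.coeff_C_mul, hWc]
    ring
  have hkey : H * ((1 + X) * (Q : A⟦X⟧))
      = PowerSeries.C y * ((r:A⟦X⟧) * X - X - 1) := by
    rw [hHGW]
    linear_combination (-(1+X)) * hdQ + hpoly + (-((r:A⟦X⟧)) * (Q:A⟦X⟧)) * hUW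
  -- the antiderivative J
  set J : A⟦X⟧ := PowerSeries.mk (fun k => if k = 0 then 0
    else (-1:A)^k * (S k - r) * Ring.inverse ((k : ℕ) : A)) with hJdef
  have hJd : d⁄dX A J = - H := by
    ext k
    rw [coeff_derivative, hJdef, coeff_mk, map_neg, hHdef, coeff_mk]
    simp only [Nat.succ_ne_zero, if_false]
    have h := inv_nat_mul (A := A) (k := k+1) k.succ_ne_zero
    push_cast at h ⊢
    linear_combination ((-1:A)^(k+1) * (S (k+1) - (r:A))) * h
  set T : ℕ → A⟦X⟧ := fun i => PowerSeries.C (y^(i+1) * Ring.inverse (((i+1 : ℕ)) : A))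
    * X^(i+1) * W^(r*(i+1)) with hTdef
  set B : A⟦X⟧ := (1 + X) - (r:A⟦X⟧) * X with hBdef
  have hWd : d⁄dX A W = - W^2 := by
    rw [hWdef, PowerSeries.derivative_inv]
    have h5 : d⁄dX A (U : A⟦X⟧) = 1 := by rw [hUval]; simp
    rw [h5, mul_one]
  have hTd : ∀ i, d⁄dX A (T i)
      = PowerSeries.C (y^(i+1)) * X^i * W^(r*(i+1)+1) * B := by
    intro i
    rw [hTdef]
    rw [Derivation.leibniz, Derivation.leibniz, Derivation.leibniz_pow,
      Derivation.leibniz_pow, derivative_C, hWd, derivative_X]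
    simp only [smul_eq_mul, nsmul_eq_mul, mul_one, mul_zero, add_zero, Nat.add_sub_cancel]
    rw [hBdef]
    have e2 : W^(r*(i+1)-1) * (-W^2) = -(W^(r*(i+1)) * W) := by
      have h4 : W^(r*(i+1)-1) * W = W^(r*(i+1)) :=
        pow_sub_one_mul (Nat.mul_ne_zero hrn i.succ_ne_zero) W
      calc W^(r*(i+1)-1) * (-W^2) = -(W^(r*(i+1)-1) * W * W) := by ring
        _ = -(W^(r*(i+1)) * W) := by rw [h4]
    have hc1 : PowerSeries.C (y^(i+1) * Ring.inverse (((i+1:ℕ)) : A)) * (((i+1:ℕ)) : A⟦X⟧)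
        = PowerSeries.C (y^(i+1)) := by
      rw [← map_natCast (PowerSeries.C (R := A)) (i+1), ← map_mul]
      congr 1
      rw [mul_assoc, inv_nat_mul (Nat.succ_ne_zero i), mul_one]
    have hc2 : PowerSeries.C (y^(i+1) * Ring.inverse (((i+1:ℕ)) : A)) * (((r*(i+1):ℕ)) : A⟦X⟧)
        = PowerSeries.C (y^(i+1)) * ((r:ℕ) : A⟦X⟧) := by
      rw [Nat.cast_mul]
      linear_combination ((r:ℕ) : A⟦X⟧) * hc1
    linear_combination (PowerSeries.C (y^(i+1) * Ring.inverse (((i+1:ℕ)) : A)) * X^(i+1)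
        * (((r*(i+1):ℕ)) : A⟦X⟧)) * e2
      + (-(X^(i+1) * W^(r*(i+1)) * W)) * hc2
      + (W^(r*(i+1)) * X^i) * hc1
      + (-(PowerSeries.C (y^(i+1)) * W^(r*(i+1)) * X^i)) * hUW
  -- telescoping
  have hpowr : (1+X:A⟦X⟧)^r * W^r = 1 := by rw [← mul_pow, hUW, one_pow]
  set g : ℕ → A⟦X⟧ := fun i => PowerSeries.C (y^(i+1)) * X^i * W^(r*i+1) with hgdef
  have htel : ∀ i, (PowerSeries.C (y^(i+1)) * X^i * W^(r*(i+1)+1)) * (Q:A⟦X⟧)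
      = g i - g (i+1) := by
    intro i
    rw [hQval, hgdef]
    have hsplit : W^(r*(i+1)+1) = W^(r*i+1) * W^r := by
      rw [← pow_add]; congr 1; ring
    have hy : PowerSeries.C (y^(i+1)) * PowerSeries.C y = PowerSeries.C (y^(i+1+1)) := by
      rw [← map_mul]; congr 1; ring
    rw [hsplit]
    linear_combination (PowerSeries.C (y^(i+1)) * X^i * W^(r*i+1)) * hpowr
      + (-(X^(i+1) * W^(r*i+1) * W^r)) * hy
  have hsum : (∑ i ∈ Finset.range n, PowerSeries.C (y^(i+1)) * X^i * W^(r*(i+1)+1)) * (Q:A⟦X⟧)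
      = PowerSeries.C y * W - PowerSeries.C (y^(n+1)) * X^n * W^(r*n+1) := by
    rw [Finset.sum_mul, Finset.sum_congr rfl (fun i _ => htel i), Finset.sum_range_sub' g n]
    rw [hgdef]
    norm_num
  set Qi : A⟦X⟧ := ((Q⁻¹ : A⟦X⟧ˣ) : A⟦X⟧) with hQidef
  have hQQ : (Q : A⟦X⟧) * Qi = 1 := by rw [hQidef]; exact_mod_cast Q.mul_inv
  have hHexp : -H = PowerSeries.C y * W * Qi * B := by
    rw [hBdef]
    linear_combination (-(W * Qi)) * hkey + H * hUW + (H*(1+X)*W) * hQQ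
  set Sg : A⟦X⟧ := ∑ i ∈ Finset.range n, PowerSeries.C (y^(i+1)) * X^i * W^(r*(i+1)+1) with hSgdef
  set D : A⟦X⟧ := J - ∑ i ∈ Finset.range n, T i with hDdef
  have hDd : d⁄dX A D = X^n * (PowerSeries.C (y^(n+1)) * W^(r*n+1) * Qi * B) := by
    rw [hDdef, map_sub, map_sum, hJd, Finset.sum_congr rfl (fun i _ => hTd i),
      ← Finset.sum_mul, ← hSgdef, hHexp]
    linear_combination (-(Qi * B)) * hsum + (Sg * B) * hQQ
  -- low coefficients of D vanish
  have hD0 : (PowerSeries.coeff 0) D = 0 := by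
    rw [hDdef, map_sub, map_sum]
    have hJ0 : (PowerSeries.coeff 0) J = 0 := by rw [hJdef, coeff_mk]; simp
    have hT0 : ∀ i ∈ Finset.range n, (PowerSeries.coeff 0) (T i) = 0 := by
      intro i _
      rw [hTdef]
      simp only [coeff_zero_eq_constantCoeff, map_mul, map_pow, constantCoeff_X]
      simp
    rw [hJ0, Finset.sum_eq_zero hT0]
    ring
  have hDlow : ∀ j, j ≤ n → (PowerSeries.coeff j) D = 0 := by
    intro j hj
    cases j with
    | zero => exact hD0
    | succ m =>
      have hmn : m < n := Nat.lt_of_succ_le hj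
      have h1 : (PowerSeries.coeff m) (d⁄dX A D) = 0 := by
        rw [hDd]
        exact PowerSeries.X_pow_dvd_iff.mp (dvd_mul_right _ _) m hmn
      rw [coeff_derivative] at h1
      have h3 := inv_nat_mul (A := A) (k := m+1) (Nat.succ_ne_zero m)
      push_cast at h1 h3
      linear_combination (Ring.inverse (((m:A))+1)) * h1
        - ((PowerSeries.coeff (m+1)) D) * h3
  have hdvd : (X:A⟦X⟧)^(n+1) ∣ D :=
    PowerSeries.X_pow_dvd_iff.mpr (fun m hm => hDlow m (Nat.lt_succ_iff.mp hm))
  obtain ⟨E, hE⟩ := hdvd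
  have hmain : (PowerSeries.coeff n) ((1+X)^(r*n) * J)
      = (PowerSeries.coeff n) ((1+X)^(r*n) * ∑ i ∈ Finset.range n, T i) := by
    have h0 : (PowerSeries.coeff n) ((1+X)^(r*n) * D) = 0 := by
      rw [hE]
      have hc : (1+X:A⟦X⟧)^(r*n) * (X^(n+1) * E) = X^(n+1) * ((1+X)^(r*n) * E) := by ring
      rw [hc]
      exact PowerSeries.X_pow_dvd_iff.mp (dvd_mul_right _ _) n (Nat.lt_succ_self n)
    rw [hDdef, mul_sub, map_sub] at h0
    exact sub_eq_zero.mp h0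
  -- compute the J side
  set ψ : ℕ → A := fun j => if j = 0 then 0 else
    ((r*n).choose (n-j) : A) * (-1:A)^j * (S j - (r:A)) * Ring.inverse ((j:ℕ) : A) with hψdef
  have hL : (PowerSeries.coeff n) ((1+X)^(r*n) * J)
      = ∑ k ∈ Finset.Icc 1 n, ((r * n).choose (n - k) : A) * (-1 : A) ^ k *
          ((∑ i : Fin r, (c i) ^ k) - (r : A)) * Ring.inverse ((k : A)) := by
    have hψ : ∀ k ∈ Finset.range (n+1),
        (PowerSeries.coeff k) ((1+X)^(r*n)) * (PowerSeries.coeff (n-k)) J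
        = ψ (n - k) := by
      intro k hk
      have hk' : k ≤ n := Nat.lt_succ_iff.mp (Finset.mem_range.mp hk)
      rw [coeff_one_add_X_pow, hJdef, coeff_mk, hψdef]
      by_cases h : n - k = 0
      · rw [h]; simp
      · simp only [if_neg h]
        have e : n - (n - k) = k := by omega
        rw [e]
        ring
    rw [PowerSeries.coeff_mul, Finset.Nat.sum_antidiagonal_eq_sum_range_succ_mk,
      Finset.sum_congr rfl hψ]
    have hrefl := Finset.sum_range_reflect ψ (n+1)
    simp only [Nat.add_sub_cancel] at hrefl
    rw [hrefl, Finset.sum_range_succ']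
    rw [hψdef]
    simp only [if_pos rfl, add_zero, Nat.succ_ne_zero, if_neg, if_true, if_false]
    rw [← Finset.Ico_add_one_right_eq_Icc, Finset.sum_Ico_eq_sum_range]
    refine Finset.sum_congr rfl fun i _ => ?_
    have e1 : 1 + i = i + 1 := Nat.add_comm 1 i
    rw [e1]
  -- compute the T side
  have hR : (PowerSeries.coeff n) ((1+X)^(r*n) * ∑ i ∈ Finset.range n, T i)
      = ∑ i ∈ Finset.range n, ((r*(n-(i+1))).choose (n-(i+1)) : A)
          * (y^(i+1) * Ring.inverse (((i+1:ℕ)):A)) := by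
    rw [Finset.mul_sum, map_sum]
    refine Finset.sum_congr rfl fun i hi => ?_
    have hin : i + 1 ≤ n := Nat.succ_le_of_lt (Finset.mem_range.mp hi)
    have hsplit : (1+X:A⟦X⟧)^(r*n) = (1+X)^(r*(n-(i+1))) * ((1+X)^(r*(i+1))) := by
      rw [← pow_add, ← Nat.mul_add, Nat.sub_add_cancel hin]
    have hcan : (1+X:A⟦X⟧)^(r*(i+1)) * W^(r*(i+1)) = 1 := by
      rw [← mul_pow, hUW, one_pow]
    rw [hTdef]
    have hre : (1+X:A⟦X⟧)^(r*n) * (PowerSeries.C (y^(i+1)*Ring.inverse (((i+1:ℕ)):A))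
          * X^(i+1) * W^(r*(i+1)))
        = X^(i+1) * (PowerSeries.C (y^(i+1)*Ring.inverse (((i+1:ℕ)):A)) * (1+X)^(r*(n-(i+1)))) := by
      rw [hsplit]
      linear_combination (X^(i+1) * PowerSeries.C (y^(i+1)*Ring.inverse (((i+1:ℕ)):A))
        * (1+X:A⟦X⟧)^(r*(n-(i+1)))) * hcan
    rw [hre]
    have hXc := PowerSeries.coeff_X_pow_mul
      (PowerSeries.C (y^(i+1)*Ring.inverse (((i+1:ℕ)):A)) * (1+X:A⟦X⟧)^(r*(n-(i+1)))) (i+1) (n-(i+1))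
    rw [Nat.sub_add_cancel hin] at hXc
    rw [hXc, PowerSeries.coeff_C_mul, coeff_one_add_X_pow]
    ring
  -- finish
  calc ∑ k ∈ Finset.range n, ((r * k).choose k : A) * y ^ (n - k) * Ring.inverse (((n - k : ℕ) : A))
      = ∑ j ∈ Finset.range n, ((r * (n-1-j)).choose (n-1-j) : A) * y ^ (n - (n-1-j))
          * Ring.inverse (((n - (n-1-j) : ℕ) : A)) :=
        (Finset.sum_range_reflect
          (fun k => ((r * k).choose k : A) * y ^ (n - k) * Ring.inverse (((n - k : ℕ) : A))) n).symm
    _ = ∑ i ∈ Finset.range n, ((r*(n-(i+1))).choose (n-(i+1)) : A)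
          * (y^(i+1) * Ring.inverse (((i+1:ℕ)):A)) := by
        refine Finset.sum_congr rfl fun j hj => ?_
        have hj' : j < n := Finset.mem_range.mp hj
        have e1 : n - 1 - j = n - (j+1) := by omega
        rw [e1]
        have e2 : n - (n - (j+1)) = j + 1 := by omega
        rw [e2]
        ring
    _ = (PowerSeries.coeff n) ((1+X)^(r*n) * ∑ i ∈ Finset.range n, T i) := hR.symm
    _ = (PowerSeries.coeff n) ((1+X)^(r*n) * J) := hmain.symm
    _ = _ := hL
end

section
/- Let p > 3 be a prime. Then, in ℤ/p²ℤ, one has 27·∑_{k=0}^{p−1} C(3k,k)·4^k·(27^k)^{−1} = 3 + 8·p·(3 + q_p(2)), where (27^k)^{−1} denotes the inverse of 27^k in ℤ/p²ℤ (27 is a unit modulo p² since p > 3). (Equivalently, ∑_{0≤k<p} C(3k,k)·(4/27)^k ≡ 1/9 + (8/27)·p·(3 + q_p(2)) (mod p²).) -/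
open Finset Polynomial

set_option linter.unusedSectionVars false
section Aux
variable {p : ℕ} [hF : Fact p.Prime]

lemma hp2 : (p : ZMod (p^2)) * p = 0 := by
  have : ((p^2 : ℕ) : ZMod (p^2)) = 0 := ZMod.natCast_self _
  push_cast at this
  linear_combination this

instance : NeZero (p^2) := ⟨by have := hF.out.pos; positivity⟩

lemma unit_of_lt {i : ℕ} (h0 : i ≠ 0) (hi : i < p) : IsUnit (i : ZMod (p^2)) := by
  refine (ZMod.isUnit_iff_coprime i (p^2)).2 (Nat.Coprime.pow_right _ ?_)
  exact (Nat.coprime_comm.1 (hF.out.coprime_iff_not_dvd.2 (Nat.not_dvd_of_pos_of_lt (by omega) hi)))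

lemma unit2 (hp : 3 < p) : IsUnit (2 : ZMod (p^2)) := by
  have := unit_of_lt (p := p) (i := 2) (by omega) (by omega); exact_mod_cast this

lemma unit3 (hp : 3 < p) : IsUnit (3 : ZMod (p^2)) := by
  have := unit_of_lt (p := p) (i := 3) (by omega) (by omega); exact_mod_cast this

/-- lift a mod-p congruence of integers to `p * x = p * y` in `ZMod (p^2)`. -/
lemma liftp {a b : ℤ} (h : (a : ZMod p) = b) :
    (p : ZMod (p^2)) * (a : ZMod (p^2)) = (p : ZMod (p^2)) * b := by
  have hd : (p:ℤ) ∣ a - b := by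
    have : ((a - b : ℤ) : ZMod p) = 0 := by push_cast; rw [h]; ring
    exact (ZMod.intCast_zmod_eq_zero_iff_dvd _ p).1 this
  have hd2 : ((p:ℤ)^2) ∣ (p * (a - b)) := by
    obtain ⟨t, ht⟩ := hd; exact ⟨t, by rw [ht]; ring⟩
  have : ((p * (a - b) : ℤ) : ZMod (p^2)) = 0 := by
    rw [ZMod.intCast_zmod_eq_zero_iff_dvd]; exact_mod_cast hd2
  push_cast at this
  linear_combination this

/-- `C(n, t) ≡ (-1)^t (mod p)` when `n ≡ -1 (mod p)`, `t < p`, `t ≤ n`. -/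
lemma neg_one_choose {n : ℕ} (hn : (n : ZMod p) = -1) :
    ∀ t, t < p → t ≤ n → ((n.choose t : ℕ) : ZMod p) = (-1)^t := by
  intro t
  induction t with
  | zero => intro _ _; simp
  | succ t ih =>
    intro htp htn
    have h1 : ((n.choose (t+1) * (t+1) : ℕ) : ZMod p) = ((n.choose t * (n - t) : ℕ) : ZMod p) := by
      rw [Nat.choose_succ_right_eq]
    have hcast : ((n - t : ℕ) : ZMod p) = (n : ZMod p) - t := by
      rw [Nat.cast_sub (by omega)]
    push_cast at h1
    rw [hcast, hn, ih (by omega) (by omega)] at h1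
    have hne : ((t:ZMod p) + 1) ≠ 0 := by
      have : (((t+1 : ℕ)) : ZMod p) ≠ 0 := by
        rw [Ne, ZMod.natCast_eq_zero_iff]
        exact Nat.not_dvd_of_pos_of_lt (by omega) (by omega)
      push_cast at this; exact this
    have key : ((n.choose (t+1) : ℕ) : ZMod p) * ((t:ZMod p)+1) = (-1)^(t+1) * ((t:ZMod p)+1) := by
      rw [h1]; ring
    exact mul_right_cancel₀ hne key

end Aux

section Key
variable {p : ℕ} [hF : Fact p.Prime]

lemma nat_id1 (n k : ℕ) (hn : 1 ≤ n) : n * (n-1).choose k = n.choose (k+1) * (k+1) := by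
  have := Nat.add_one_mul_choose_eq (n-1) k
  rwa [Nat.sub_add_cancel hn] at this

lemma key3p (hp : 3 < p) {i : ℕ} (h1 : 1 ≤ i) (h2 : i < p) :
    (((3*p).choose i : ℕ) : ZMod (p^2)) = 3 * ((p.choose i : ℕ) : ZMod (p^2)) := by
  obtain ⟨t, rfl⟩ : ∃ t, i = t + 1 := ⟨i - 1, by omega⟩
  have hA : (3*p) * (3*p-1).choose t = (3*p).choose (t+1) * (t+1) := nat_id1 (3*p) t (by omega)
  have hB : p * (p-1).choose t = p.choose (t+1) * (t+1) := nat_id1 p t (by omega)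
  -- mod p congruence between the two "choose" values
  have hc1 : (((3*p-1).choose t : ℕ) : ZMod p) = (-1)^t := by
    refine neg_one_choose ?_ t (by omega) (by omega)
    rw [Nat.cast_sub (show 1 ≤ 3*p by omega)]
    push_cast [ZMod.natCast_self]; ring
  have hc2 : (((p-1).choose t : ℕ) : ZMod p) = (-1)^t := by
    refine neg_one_choose ?_ t (by omega) (by omega)
    rw [Nat.cast_sub (show 1 ≤ p by omega)]
    push_cast [ZMod.natCast_self]; ring
  have hlift : (p : ZMod (p^2)) * (((3*p-1).choose t : ℕ) : ZMod (p^2))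
      = (p : ZMod (p^2)) * (((p-1).choose t : ℕ) : ZMod (p^2)) := by
    have := liftp (p := p) (a := ((3*p-1).choose t : ℤ)) (b := ((p-1).choose t : ℤ))
      (by push_cast; rw [hc1, hc2])
    push_cast at this ⊢; exact this
  -- cast the two nat identities into ZMod (p^2)
  have hA' : (3:ZMod (p^2)) * p * ((3*p-1).choose t : ℕ)
      = (((3*p).choose (t+1) : ℕ) : ZMod (p^2)) * ((t:ZMod (p^2))+1) := by
    have := congrArg (Nat.cast : ℕ → ZMod (p^2)) hA; push_cast at this
    linear_combination this
  have hB' : (p:ZMod (p^2)) * ((p-1).choose t : ℕ)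
      = ((p.choose (t+1) : ℕ) : ZMod (p^2)) * ((t:ZMod (p^2))+1) := by
    have := congrArg (Nat.cast : ℕ → ZMod (p^2)) hB; push_cast at this
    linear_combination this
  have hunit : IsUnit ((t:ZMod (p^2)) + 1) := by
    have := unit_of_lt (p := p) (i := t+1) (by omega) (by omega)
    push_cast at this; exact this
  refine hunit.mul_left_cancel ?_
  calc ((t:ZMod (p^2))+1) * ((3*p).choose (t+1) : ℕ)
      = 3 * ((p:ZMod (p^2)) * ((3*p-1).choose t : ℕ)) := by linear_combination -hA'
    _ = 3 * ((p:ZMod (p^2)) * ((p-1).choose t : ℕ)) := by rw [hlift]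
    _ = ((t:ZMod (p^2))+1) * (3 * (p.choose (t+1) : ℕ)) := by linear_combination 3 * hB'

lemma nat_id2 (i : ℕ) (hi : i < p) : p.choose i * (p - i) = p * (p-1).choose i := by
  have h1 := Nat.choose_succ_right_eq p i
  have h2 := nat_id1 p i (by omega)
  omega

end Key

section Poly
variable {R : Type*} [CommRing R]

lemma telA (m : ℕ) :
    (X + Polynomial.C 4) * ∑ j ∈ range (m+1), Polynomial.C ((-1:R)^j * 4^(m+1-1-j)) * X^j
      = Polynomial.C ((4:R)^(m+1)) + Polynomial.C ((-1:R)^(m+1-1)) * X^(m+1) := by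
  have key : ∀ j ∈ range (m+1),
      (X + Polynomial.C 4) * (Polynomial.C ((-1:R)^j * 4^(m+1-1-j)) * X^j)
      = (Polynomial.C ((-1:R)^j * 4^(m+1-j)) * X^j)
        - (Polynomial.C ((-1:R)^(j+1) * 4^(m+1-(j+1))) * X^(j+1)) := by
    intro j hj
    rw [mem_range] at hj
    have e1 : m+1 - j = (m+1-1-j) + 1 := by omega
    have e2 : m+1 - (j+1) = m+1-1-j := by omega
    rw [e1, e2]
    simp only [map_mul, map_pow, map_neg, map_one]
    ring
  rw [Finset.mul_sum, Finset.sum_congr rfl key, Finset.sum_range_sub']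
  simp only [Nat.add_sub_cancel, Nat.sub_self, Nat.sub_zero, pow_zero,
    map_mul, map_pow, map_neg, map_one]
  ring

lemma telB (p : ℕ) :
    (1 - Polynomial.C 2 * X) * ∑ j ∈ range p, Polynomial.C ((2:R)^j) * X^j
      = 1 - Polynomial.C ((2:R)^p) * X^p := by
  have key : ∀ j ∈ range p,
      (1 - Polynomial.C 2 * X) * (Polynomial.C ((2:R)^j) * X^j)
      = (Polynomial.C ((2:R)^j) * X^j) - (Polynomial.C ((2:R)^(j+1)) * X^(j+1)) := by
    intro j _
    simp only [map_mul, map_pow]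
    ring
  rw [Finset.mul_sum, Finset.sum_congr rfl key, Finset.sum_range_sub']
  simp only [pow_zero, map_one]
  ring

lemma telC (p : ℕ) :
    (1 - Polynomial.C 2 * X)^2 * ∑ j ∈ range p, Polynomial.C (((j:R)+1) * 2^j) * X^j
      = 1 - Polynomial.C (((p:R)+1) * 2^p) * X^p + Polynomial.C ((p:R) * 2^(p+1)) * X^(p+1) := by
  have key : ∀ j ∈ range p,
      (1 - Polynomial.C 2 * X)^2 * (Polynomial.C (((j:R)+1) * 2^j) * X^j)
      = (Polynomial.C (((j:R)+1) * 2^j) * X^j - Polynomial.C ((j:R) * 2^(j+1)) * X^(j+1))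
        - (Polynomial.C (((j:R)+1+1) * 2^(j+1)) * X^(j+1)
            - Polynomial.C (((j:R)+1) * 2^(j+1+1)) * X^(j+1+1)) := by
    intro j _
    simp only [map_mul, map_pow, map_add, map_one, map_natCast]
    ring
  rw [Finset.mul_sum, Finset.sum_congr rfl key]
  have := Finset.sum_range_sub' (fun j => Polynomial.C (((j:R)+1) * 2^j) * X^j
      - Polynomial.C ((j:R) * 2^(j+1)) * X^(j+1)) p
  push_cast at this ⊢
  rw [this]
  simp only [pow_zero, map_one, map_zero, Nat.cast_zero, zero_mul, zero_add, one_mul]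
  ring

end Poly

section KeyIdentity
variable {R : Type*} [CommRing R]

/-- The key coefficient identity, valid in any commutative ring. -/
lemma coeff_key (p : ℕ) (hp : 0 < p) :
    (81 : R) * 4^p * (∑ k ∈ range p, ((3*k).choose k : R) * 4^k * 27^(p-1-k))
      = 4^p * ∑ j ∈ range p, (((3*p).choose (p-1-j) : ℕ) : R) *
          ((-1:R)^j * 4^(p-1-j) + 2*4^p*2^j + 18*4^p*((j:R)+1)*2^j) := by
  -- polynomials
  set x : R[X] := 4 * (1 + X)^3 with hx
  set y : R[X] := 27 * X with hy
  have hgeom : (∑ k ∈ range p, x ^ k * y ^ (p - 1 - k)) * (x - y) = x ^ p - y ^ p :=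
    geom_sum₂_mul x y p
  set Sp : R[X] := ∑ k ∈ range p, x ^ k * y ^ (p - 1 - k) with hS
  -- the inverse-approximant V
  set uA : R[X] := ∑ j ∈ range p, Polynomial.C ((-1:R)^j * 4^(p-1-j)) * X^j with huA
  set uB : R[X] := ∑ j ∈ range p, Polynomial.C ((2:R)^j) * X^j with huB
  set uC : R[X] := ∑ j ∈ range p, Polynomial.C (((j:R)+1) * 2^j) * X^j with huC
  set V : R[X] := ∑ j ∈ range p, Polynomial.C ((-1:R)^j * 4^(p-1-j) + 2*4^p*2^j
      + 18*4^p*((j:R)+1)*2^j) * X^j with hV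
  have hVsplit : V = uA + Polynomial.C (2*(4:R)^p) * uB + Polynomial.C (18*(4:R)^p) * uC := by
    rw [hV, huA, huB, huC, Finset.mul_sum, Finset.mul_sum, ← Finset.sum_add_distrib,
      ← Finset.sum_add_distrib]
    refine Finset.sum_congr rfl fun j _ => ?_
    simp only [map_add, map_mul, map_pow, map_neg, map_one, map_natCast, map_ofNat]
    ring
  have hA := telA (R := R) (p - 1)
  rw [show p - 1 + 1 = p by omega] at hA
  have hB := telB (R := R) p
  have hC := telC (R := R) p
  rw [← huA] at hA
  rw [← huB] at hB
  rw [← huC] at hC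
  -- the big product identity
  set Efull : R[X] := Polynomial.C ((-1:R)^(p-1)) * (Polynomial.C 2 * X - 1)^2
      + 2 * Polynomial.C ((4:R)^p) * Polynomial.C ((2:R)^p) * (X + Polynomial.C 4)
          * (Polynomial.C 2 * X - 1)
      + 18 * Polynomial.C ((4:R)^p) * (X + Polynomial.C 4)
          * (Polynomial.C ((p:R) * 2^(p+1)) * X - Polynomial.C (((p:R)+1) * 2^p)) with hE
  have hBig : ((X + Polynomial.C 4) * (Polynomial.C 2 * X - 1)^2) * V
      = 81 * Polynomial.C ((4:R)^p) + X^p * Efull := by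
    rw [hVsplit, hE]
    simp only [map_mul, map_add, map_pow, map_neg, map_one, map_natCast, map_ofNat] at hA hB hC ⊢
    linear_combination ((2 * X - 1 : R[X])^2) * hA
      - (2 * (4:R[X])^p * (X + 4) * (2 * X - 1)) * hB
      + (18 * (4:R[X])^p * (X + 4)) * hC
  have hfact : x - y = (X + Polynomial.C 4) * (Polynomial.C 2 * X - 1)^2 := by
    rw [hx, hy]
    simp only [map_ofNat]
    ring
  -- combine
  have hcomb : Sp * (81 * Polynomial.C ((4:R)^p) + X^p * Efull) = (x^p - y^p) * V := by
    calc Sp * (81 * Polynomial.C ((4:R)^p) + X^p * Efull)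
        = Sp * (((X + Polynomial.C 4) * (Polynomial.C 2 * X - 1)^2) * V) := by rw [hBig]
      _ = (Sp * (x - y)) * V := by rw [hfact]; ring
      _ = (x^p - y^p) * V := by rw [hgeom]
  -- take coefficient p-1
  have hco := congrArg (fun f : R[X] => f.coeff (p-1)) hcomb
  -- LHS coefficient
  have hL : (Sp * (81 * Polynomial.C ((4:R)^p) + X^p * Efull)).coeff (p-1)
      = 81 * 4^p * Sp.coeff (p-1) := by
    rw [mul_add]
    rw [Polynomial.coeff_add]
    have h1 : Sp * (81 * Polynomial.C ((4:R)^p)) = Polynomial.C (81 * (4:R)^p) * Sp := by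
      simp only [map_mul, map_ofNat]; ring
    have h2 : Sp * (X^p * Efull) = (Sp * Efull) * X^p := by ring
    rw [h1, h2, Polynomial.coeff_C_mul, Polynomial.coeff_mul_X_pow']
    rw [if_neg (by omega)]
    ring
  -- Sp coefficient
  have hSco : Sp.coeff (p-1) = ∑ k ∈ range p, ((3*k).choose k : R) * (4^k * 27^(p-1-k)) := by
    rw [hS, Polynomial.finset_sum_coeff]
    refine Finset.sum_congr rfl fun k hk => ?_
    rw [mem_range] at hk
    have hterm : x ^ k * y ^ (p-1-k)
        = Polynomial.C ((4:R)^k * 27^(p-1-k)) * ((1+X)^(3*k) * X^(p-1-k)) := by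
      rw [hx, hy, mul_pow, mul_pow, pow_mul, map_mul, map_pow, map_pow, map_ofNat, map_ofNat]
      ring
    rw [hterm, Polynomial.coeff_C_mul, Polynomial.coeff_mul_X_pow', if_pos (by omega),
      show p - 1 - (p-1-k) = k by omega, Polynomial.coeff_one_add_X_pow]
    ring
  -- RHS coefficient
  have hR : ((x^p - y^p) * V).coeff (p-1)
      = 4^p * ∑ j ∈ range p, (((3*p).choose (p-1-j) : ℕ) : R) *
          ((-1:R)^j * 4^(p-1-j) + 2*4^p*2^j + 18*4^p*((j:R)+1)*2^j) := by
    have hxp : x^p * V = Polynomial.C ((4:R)^p) * ((1+X)^(3*p) * V) := by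
      rw [hx, mul_pow, pow_mul, map_pow, map_ofNat]
      ring
    have hyp : y^p * V = ((27:R[X])^p * V) * X^p := by rw [hy, mul_pow]; ring
    rw [sub_mul, Polynomial.coeff_sub, hxp, hyp, Polynomial.coeff_C_mul,
      Polynomial.coeff_mul_X_pow', if_neg (by omega), sub_zero]
    congr 1
    rw [hV, Finset.mul_sum, Polynomial.finset_sum_coeff]
    refine Finset.sum_congr rfl fun j hj => ?_
    rw [mem_range] at hj
    have hterm : (1+X)^(3*p) * (Polynomial.C ((-1:R)^j * 4^(p-1-j) + 2*4^p*2^j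
        + 18*4^p*((j:R)+1)*2^j) * X^j)
        = Polynomial.C ((-1:R)^j * 4^(p-1-j) + 2*4^p*2^j + 18*4^p*((j:R)+1)*2^j)
            * ((1+X)^(3*p) * X^j) := by ring
    rw [hterm, Polynomial.coeff_C_mul, Polynomial.coeff_mul_X_pow', if_pos (by omega),
      Polynomial.coeff_one_add_X_pow]
    ring
  rw [hL, hSco, hR] at hco
  calc (81:R) * 4^p * (∑ k ∈ range p, ((3*k).choose k : R) * 4^k * 27^(p-1-k))
      = 81 * 4 ^ p * ∑ k ∈ range p, ((3*k).choose k : R) * (4 ^ k * 27 ^ (p - 1 - k)) := by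
        refine congrArg _ (Finset.sum_congr rfl fun k _ => by ring)
    _ = _ := hco

end KeyIdentity

lemma split_first {M : Type*} [AddCommMonoid M] (p : ℕ) (hp : 0 < p) (f : ℕ → M) :
    ∑ i ∈ Finset.range p, f i = (∑ i ∈ Finset.range (p-1), f (i+1)) + f 0 := by
  obtain ⟨m, rfl⟩ : ∃ m, p = m+1 := ⟨p-1, by omega⟩
  simp [Finset.sum_range_succ']

lemma final_alg {S : Type*} [CommRing S] (P q c : S) (h : P * P = 0) :
    (3 + P*c)^3 * (3 + 8*P*(3 + q))
      = 9*(3*((2+2*P*q)^2 - (3+P*c)) + 3*(2+2*P*q)^2*((3+P*c) - 1)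
          + 18*P*(2+2*P*q)^2*(3+P*c) - 2*(1 + (2+2*P*q)^3 + 9*P*(2+2*P*q)^3)) := by
  linear_combination (27*c^2 + 108*q^2 + 216*P*c^2 + 3*P*c^3 - 1296*P*q*c + 72*P*q*c^2
    + 1944*P*q^2 - 108*P*q^2*c + 144*P*q^3 + 24*P*P*c^3 + 8*P*P*q*c^3 - 648*P*P*q^2*c
    + 1296*P*P*q^3) * h

/-- `∑_{0≤k<p} C(3k,k) (4/27)^k ≡ 1/9 + (8/27) p (3 + q_p(2)) (mod p²)`,
stated multiplied through by `27`. -/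
theorem stmt18 (p : ℕ) [Fact p.Prime] (hp : 3 < p) :
    27 * ∑ k ∈ Finset.range p,
        ((3 * k).choose k : ZMod (p ^ 2)) * 4 ^ k * ((27 : ZMod (p ^ 2)) ^ k)⁻¹ =
      3 + 8 * (p : ZMod (p ^ 2)) *
        (3 + (((2 ^ (p - 1) - 1) / p : ℤ) : ZMod (p ^ 2))) := by
  have hodd : Odd p := (Fact.out : p.Prime).odd_of_ne_two (by omega)
  have hppos : 0 < p := by omega
  set R := ZMod (p^2)
  set q : R := (((2 ^ (p - 1) - 1) / p : ℤ) : R) with hqdef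
  -- Fermat quotient facts
  have hdvd2 : (p:ℤ) ∣ 2^(p-1) - 1 := by
    have h2 : ((2:ℤ) : ZMod p) ≠ 0 := by
      rw [Ne, ZMod.intCast_zmod_eq_zero_iff_dvd]
      intro h
      exact absurd (Int.le_of_dvd (by norm_num) h) (by exact_mod_cast by omega)
    have h1 := ZMod.pow_card_sub_one_eq_one h2
    have : (((2:ℤ)^(p-1) - 1 : ℤ) : ZMod p) = 0 := by push_cast at h1 ⊢; rw [h1]; ring
    exact (ZMod.intCast_zmod_eq_zero_iff_dvd _ p).1 this
  have hdvd3 : (p:ℤ) ∣ 3^(p-1) - 1 := by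
    have h3 : ((3:ℤ) : ZMod p) ≠ 0 := by
      rw [Ne, ZMod.intCast_zmod_eq_zero_iff_dvd]
      intro h
      exact absurd (Int.le_of_dvd (by norm_num) h) (by exact_mod_cast by omega)
    have h1 := ZMod.pow_card_sub_one_eq_one h3
    have : (((3:ℤ)^(p-1) - 1 : ℤ) : ZMod p) = 0 := by push_cast at h1 ⊢; rw [h1]; ring
    exact (ZMod.intCast_zmod_eq_zero_iff_dvd _ p).1 this
  have hq2 : (2:R)^p = 2 + 2*(p:R)*q := by
    have hmul : (p:ℤ) * ((2 ^ (p - 1) - 1) / p) = 2^(p-1) - 1 := Int.mul_ediv_cancel' hdvd2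
    have hcast : (p:R) * q = (2:R)^(p-1) - 1 := by
      rw [hqdef]
      have := congrArg (Int.cast : ℤ → ZMod (p^2)) hmul
      push_cast at this
      exact this
    calc (2:R)^p = 2^((p-1)+1) := by rw [show p-1+1 = p by omega]
      _ = 2^(p-1) * 2 := pow_succ 2 (p-1)
      _ = ((p:R) * q + 1) * 2 := by rw [hcast]; ring
      _ = 2 + 2*(p:R)*q := by ring
  obtain ⟨c, hq3⟩ : ∃ c : R, (3:R)^p = 3 + (p:R)*c := by
    refine ⟨3 * (((3 ^ (p - 1) - 1) / p : ℤ) : R), ?_⟩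
    have hmul : (p:ℤ) * ((3 ^ (p - 1) - 1) / p) = 3^(p-1) - 1 := Int.mul_ediv_cancel' hdvd3
    have hcast : (p:R) * (((3 ^ (p - 1) - 1) / p : ℤ) : R) = (3:R)^(p-1) - 1 := by
      have := congrArg (Int.cast : ℤ → ZMod (p^2)) hmul
      push_cast at this
      exact this
    calc (3:R)^p = 3^((p-1)+1) := by rw [show p-1+1 = p by omega]
      _ = 3^(p-1) * 3 := pow_succ 3 (p-1)
      _ = 3 + (p:R) * (3 * (((3 ^ (p - 1) - 1) / p : ℤ) : R)) := by
          linear_combination -3 * hcast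
  -- abbreviations
  have h4p : (4:R)^p = ((2:R)^p)^2 := by
    rw [show (4:R) = 2^2 by norm_num, ← pow_mul, ← pow_mul, Nat.mul_comm]
  have h27p : (27:R)^p = ((3:R)^p)^3 := by
    rw [show (27:R) = 3^3 by norm_num, ← pow_mul, ← pow_mul, Nat.mul_comm]
  -- the v coefficients
  set v : ℕ → R := fun j => (-1:R)^j * 4^(p-1-j) + 2*4^p*2^j + 18*4^p*((j:R)+1)*2^j with hv
  -- key identity
  have hkey := coeff_key (R := R) p hppos
  set T : R := ∑ k ∈ range p, ((3*k).choose k : R) * 4^k * 27^(p-1-k) with hT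
  set K : R := ∑ j ∈ range p, (((3*p).choose (p-1-j) : ℕ) : R) * v j with hK
  have hkey' : (4:R)^p * (81 * T) = (4:R)^p * K := by
    rw [hT, hK, hv]
    linear_combination hkey
  have hu2 : IsUnit (2:R) := unit2 hp
  have hu3 : IsUnit (3:R) := unit3 hp
  have hu4p : IsUnit ((4:R)^p) := by
    rw [show (4:R) = 2^2 by norm_num]
    exact (hu2.pow 2).pow p
  have h81T : 81 * T = K := hu4p.mul_left_cancel hkey'
  have hu27 : IsUnit (27:R) := by
    rw [show (27:R) = 3^3 by norm_num]; exact hu3.pow 3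
  have hp2' : (p:R) * (p:R) = 0 := hp2
  have heven : Even (p-1) := Nat.Odd.sub_odd hodd odd_one
  -- reflect the sum
  have hrefl : K = ∑ i ∈ range p, (((3*p).choose i : ℕ) : R) * v (p-1-i) := by
    rw [hK, ← Finset.sum_range_reflect]
    refine Finset.sum_congr rfl fun j hj => ?_
    rw [mem_range] at hj
    rw [show p - 1 - (p-1-j) = j by omega]
  set W : R := ∑ i ∈ range p, ((p.choose i : ℕ) : R) * v (p-1-i) with hWdef
  have hW : K = 3 * W - 2 * v (p-1) := by
    have h1 : K = (∑ i ∈ range (p-1), (((3*p).choose (i+1) : ℕ) : R) * v (p-1-(i+1)))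
        + v (p-1) := by
      rw [hrefl, split_first p hppos]
      simp
    have h2 : W = (∑ i ∈ range (p-1), ((p.choose (i+1) : ℕ) : R) * v (p-1-(i+1)))
        + v (p-1) := by
      rw [hWdef, split_first p hppos]
      simp
    have h4 : ∑ i ∈ range (p-1), (((3*p).choose (i+1) : ℕ) : R) * v (p-1-(i+1))
        = 3 * ∑ i ∈ range (p-1), ((p.choose (i+1) : ℕ) : R) * v (p-1-(i+1)) := by
      rw [Finset.mul_sum]
      refine Finset.sum_congr rfl fun i hi => ?_
      rw [mem_range] at hi
      rw [key3p hp (by omega) (by omega)]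
      ring
    linear_combination h1 + h4 - 3 * h2
  -- evaluate W via binomial sums
  have e1 : ∀ i ∈ range p, ((p.choose i : ℕ) : R) * v (p-1-i)
      = ((p.choose i : ℕ) : R) * ((-1:R)^i * 4^i) + 4^p * (((p.choose i : ℕ) : R) * 2^(p-i))
        + 18 * 4^p * ((p:R) * (((p-1).choose i : ℕ) : R) * 2^(p-1-i)) := by
    intro i hi
    rw [mem_range] at hi
    have hb1 : (-1:R)^(p-1-i) = (-1:R)^i := by
      have hx : (-1:R)^(p-1-i) * (-1)^i = 1 := by
        rw [← pow_add, show p-1-i+i = p-1 by omega]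
        exact heven.neg_one_pow
      have hy : (-1:R)^i * (-1)^i = 1 := by
        rw [← pow_add]
        exact (Even.add_self i).neg_one_pow
      calc (-1:R)^(p-1-i) = (-1:R)^(p-1-i) * ((-1)^i * (-1)^i) := by rw [hy, mul_one]
        _ = ((-1:R)^(p-1-i) * (-1)^i) * (-1)^i := by ring
        _ = (-1:R)^i := by rw [hx, one_mul]
    have hb2 : p - 1 - (p-1-i) = i := by omega
    have hb3 : (2:R) * 2^(p-1-i) = 2^(p-i) := by
      rw [← pow_succ', show (p-1-i)+1 = p-i by omega]
    have hb4 : (((p-1-i : ℕ) : R) + 1) = ((p-i : ℕ) : R) := by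
      have : ((p-1-i)+1 : ℕ) = p - i := by omega
      rw [← this]
      push_cast
      ring
    have hb5 : ((p.choose i : ℕ) : R) * ((p-i : ℕ) : R) = (p:R) * (((p-1).choose i : ℕ) : R) := by
      have := congrArg (Nat.cast : ℕ → ZMod (p^2)) (nat_id2 (p := p) i hi)
      push_cast at this
      exact this
    simp only [hv]
    rw [hb2, hb1, hb4]
    calc (↑(p.choose i) : R) * ((-1:R)^i * 4^i + 2*4^p*2^(p-1-i) + 18*4^p*((p-i : ℕ) : R)*2^(p-1-i))
        = ↑(p.choose i) * ((-1)^i * 4^i) + 4^p * (↑(p.choose i) * ((2:R) * 2^(p-1-i)))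
          + 18 * 4^p * ((↑(p.choose i) * ((p-i : ℕ) : R)) * 2^(p-1-i)) := by ring
      _ = ((p.choose i : ℕ) : R) * ((-1:R)^i * 4^i) + 4^p * (((p.choose i : ℕ) : R) * 2^(p-i))
          + 18 * 4^p * ((p:R) * (((p-1).choose i : ℕ) : R) * 2^(p-1-i)) := by
          rw [hb3, hb5]
  have hbin1 : ∑ i ∈ range p, ((p.choose i : ℕ) : R) * ((-1:R)^i * 4^i)
      = (-3:R)^p - (-4:R)^p := by
    have hadd := add_pow (-4 : R) 1 p
    rw [Finset.sum_range_succ] at hadd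
    have : ((-4:R) + 1)^p = -3^p := by
      rw [show (-4:R)+1 = -3 by norm_num, hodd.neg_pow]
    rw [this] at hadd
    have h2 : (-3:R)^p = -3^p := hodd.neg_pow 3
    rw [h2]
    simp only [one_pow, mul_one, Nat.choose_self, Nat.cast_one] at hadd
    have heq : ∑ i ∈ range p, ((p.choose i : ℕ) : R) * ((-1:R)^i * 4^i)
        = ∑ i ∈ range p, (-4:R)^i * 1^(p-i) * (p.choose i : ℕ) := by
      refine Finset.sum_congr rfl fun i _ => by
        rw [one_pow, show (-4:R) = -1 * 4 by norm_num, mul_pow]; ring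
    rw [heq]
    simp only [one_pow, mul_one] at hadd ⊢
    linear_combination -hadd
  have hbin2 : ∑ i ∈ range p, ((p.choose i : ℕ) : R) * 2^(p-i) = 3^p - 1 := by
    have hadd := add_pow (1:R) 2 p
    rw [Finset.sum_range_succ] at hadd
    rw [show (1:R)+2 = 3 by norm_num] at hadd
    simp only [one_pow, one_mul, Nat.sub_self, pow_zero, Nat.choose_self, Nat.cast_one,
      mul_one] at hadd
    have : ∑ i ∈ range p, ((p.choose i : ℕ) : R) * 2^(p-i)
        = ∑ i ∈ range p, (2:R)^(p-i) * (p.choose i : ℕ) := by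
      refine Finset.sum_congr rfl fun i _ => by ring
    rw [this]
    linear_combination -hadd
  have hbin3 : ∑ i ∈ range p, (((p-1).choose i : ℕ) : R) * 2^(p-1-i) = 3^(p-1) := by
    have hadd := add_pow (1:R) 2 (p-1)
    rw [show (1:R)+2 = 3 by norm_num, show (p-1)+1 = p by omega] at hadd
    have : ∑ i ∈ range p, (((p-1).choose i : ℕ) : R) * 2^(p-1-i)
        = ∑ i ∈ range p, (1:R)^i * 2^(p-1-i) * ((p-1).choose i : ℕ) := by
      refine Finset.sum_congr rfl fun i _ => by rw [one_pow]; ring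
    rw [this]
    linear_combination -hadd
  have hWval : W = (((2:R)^p)^2 - 3^p) + ((2:R)^p)^2*((3:R)^p - 1)
      + 6*(p:R)*((2:R)^p)^2*(3:R)^p := by
    rw [hWdef, Finset.sum_congr rfl e1, Finset.sum_add_distrib, Finset.sum_add_distrib,
      ← Finset.mul_sum, ← Finset.mul_sum]
    have h3 : ∑ i ∈ range p, ((p:R) * (((p-1).choose i : ℕ) : R) * 2^(p-1-i))
        = (p:R) * ∑ i ∈ range p, (((p-1).choose i : ℕ) : R) * 2^(p-1-i) := by
      rw [Finset.mul_sum]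
      exact Finset.sum_congr rfl fun i _ => by ring
    rw [h3, hbin1, hbin2, hbin3, hodd.neg_pow, hodd.neg_pow, h4p]
    have h33 : (3:R) * 3^(p-1) = 3^p := by
      rw [← pow_succ', show (p-1)+1 = p by omega]
    linear_combination (6 * (p:R) * ((2:R)^p)^2) * h33
  have hvp1 : v (p-1) = 1 + ((2:R)^p)^3 + 9*(p:R)*((2:R)^p)^3 := by
    simp only [hv]
    rw [show p-1-(p-1) = 0 by omega, heven.neg_one_pow]
    have hc1 : (((p-1 : ℕ) : R) + 1) = (p:R) := by
      have h' : (((p-1)+1 : ℕ) : R) = ((p : ℕ) : R) := by rw [show p-1+1 = p by omega]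
      push_cast at h'
      linear_combination h'
    rw [hc1]
    have h22 : (2:R) * 2^(p-1) = 2^p := by
      rw [← pow_succ', show (p-1)+1 = p by omega]
    have h4p2 : (4:R)^p * 2^p = ((2:R)^p)^3 := by rw [h4p]; ring
    calc (1:R) * 4^0 + 2*4^p*2^(p-1) + 18*4^p*(p:R)*2^(p-1)
        = 1 + 4^p * ((2:R)*2^(p-1)) + 9*(p:R)*(4^p*((2:R)*2^(p-1))) := by ring
      _ = 1 + ((2:R)^p)^3 + 9*(p:R)*((2:R)^p)^3 := by rw [h22, h4p2]
  -- final algebra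
  have hfin : 9 * K = (3 + (p:R)*c)^3 * (3 + 8*(p:R)*(3+q)) := by
    rw [hW, hWval, hvp1, hq2, hq3]
    linear_combination -(final_alg ((p:R)) q c hp2')
  -- conclude
  have hu27p : IsUnit ((27:R)^p) := hu27.pow p
  refine hu27p.mul_left_cancel ?_
  have hTS : (27:R)^(p-1) * (∑ k ∈ Finset.range p,
      ((3 * k).choose k : R) * 4 ^ k * ((27 : R) ^ k)⁻¹) = T := by
    rw [Finset.mul_sum, hT]
    refine Finset.sum_congr rfl fun k hk => ?_
    rw [mem_range] at hk
    have hsplit27 : (27:R)^(p-1) = 27^(p-1-k) * 27^k := by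
      rw [← pow_add, show p-1-k+k = p-1 by omega]
    have hinv : (27:R)^k * ((27:R)^k)⁻¹ = 1 := ZMod.mul_inv_of_unit _ (hu27.pow k)
    calc (27:R)^(p-1) * (((3*k).choose k : R) * 4^k * ((27:R)^k)⁻¹)
        = ((3*k).choose k : R) * 4^k * 27^(p-1-k) * ((27:R)^k * ((27:R)^k)⁻¹) := by
          rw [hsplit27]; ring
      _ = ((3*k).choose k : R) * 4^k * 27^(p-1-k) := by rw [hinv, mul_one]
  have h27s : (27:R)^p = 27^(p-1) * 27 := by
    rw [← pow_succ, show (p-1)+1 = p by omega]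
  calc (27:R)^p * (27 * ∑ k ∈ Finset.range p,
        ((3 * k).choose k : R) * 4 ^ k * ((27 : R) ^ k)⁻¹)
      = 729 * ((27:R)^(p-1) * ∑ k ∈ Finset.range p,
          ((3 * k).choose k : R) * 4 ^ k * ((27 : R) ^ k)⁻¹) := by rw [h27s]; ring
    _ = 729 * T := by rw [hTS]
    _ = 9 * (81 * T) := by ring
    _ = 9 * K := by rw [h81T]
    _ = (3 + (p:R)*c)^3 * (3 + 8*(p:R)*(3+q)) := hfin
    _ = (27:R)^p * (3 + 8*(p:R)*(3+q)) := by rw [h27p, hq3]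
end
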